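/- In the uniform example with three-level recommendations (risky if M ≤ q_low, don't know if q_low < M ≤ q_high, safe if M > q_high), the optimal thresholds satisfy q_high = 2·q_low, and the optimal q_low equals 1 / (2 + c_II·(c_I+c_II+Δ_II)²/((c_I+c_II)·((c_II+Δ_II)² + c_I·c_II))). -/

import Mathlib

open MeasureTheory

/-- Loss: `y = true` is the bad outcome, `a = true` is the risky action. -/
noncomputable def lossFn (cI cII : ℝ) (y a : Bool) : ℝ :=
  (if y = false ∧ a = false then cI else 0) + (if y = true ∧ a = true then cII else 0)

/-- The optimal human signal threshold when the recommendation reveals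
M ∈ (lo, hi] and the perceived Type-II cost is cII + Δ: take risky iff
H ≤ 1 - hi + (hi - lo)·cI/(cI+cII+Δ). -/
noncomputable def hth (cI cII Δ lo hi : ℝ) : ℝ :=
  1 - hi + (hi - lo) * (cI / (cI + cII + Δ))

/-- Optimal human response to the three-level recommendation with thresholds
ql ≤ qh: the extra decision loss Δ_II applies only after a safe recommendation. -/
noncomputable def act3 (cI cII ΔII ql qh h m : ℝ) : Bool :=
  if m ≤ ql then decide (h ≤ hth cI cII 0 0 ql)
  else if m ≤ qh then decide (h ≤ hth cI cII 0 ql qh)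
  else decide (h ≤ hth cI cII ΔII qh 1)

/-- Designer's expected loss under a three-level recommendation. -/
noncomputable def L3 (cI cII ΔII ql qh : ℝ) : ℝ :=
  ∫ p in Set.Icc (0:ℝ) 1 ×ˢ Set.Icc (0:ℝ) 1,
    lossFn cI cII (decide (1 ≤ p.1 + p.2)) (act3 cI cII ΔII ql qh p.1 p.2)

/- ## Auxiliary lemmas -/

lemma loss_eq_indicator (cI cII t m h : ℝ) :
    lossFn cI cII (decide (1 ≤ h + m)) (decide (h ≤ t)) =
    Set.indicator (Set.Ioo t (1 - m)) (fun _ => cI) h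
      + Set.indicator (Set.Icc (1 - m) t) (fun _ => cII) h := by
  simp only [lossFn, Set.indicator_apply, Set.mem_Ioo, Set.mem_Icc]
  by_cases h1 : h ≤ t <;> by_cases h2 : (1:ℝ) ≤ h + m
  · simp [h1, h2, not_lt.2 h1, show (1:ℝ) - m ≤ h by linarith]
  · simp [h1, h2, not_lt.2 h1, show ¬((1:ℝ) - m ≤ h) by intro hx; exact h2 (by linarith)]
  · simp [h1, h2, not_le.1 h1, not_lt.2 (show (1:ℝ) - m ≤ h by linarith)]
  · simp [h1, h2, not_le.1 h1, show h < 1 - m by linarith,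
      show ¬((1:ℝ) - m ≤ h) by intro hx; exact h2 (by linarith)]


lemma inner_int (cI cII t m : ℝ) (ht0 : 0 ≤ t) (ht1 : t ≤ 1) (hm0 : 0 ≤ m) (hm1 : m ≤ 1) :
    ∫ h in Set.Icc (0:ℝ) 1, lossFn cI cII (decide (1 ≤ h + m)) (decide (h ≤ t)) =
    cI * max ((1 - m) - t) 0 + cII * max (t - (1 - m)) 0 := by
  simp only [loss_eq_indicator]
  have hfin : volume (Set.Icc (0:ℝ) 1) < ⊤ := measure_Icc_lt_top
  have hi1 : Integrable (Set.indicator (Set.Ioo t (1 - m)) (fun _ => cI))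
      (volume.restrict (Set.Icc (0:ℝ) 1)) :=
    (integrableOn_const hfin.ne).indicator measurableSet_Ioo
  have hi2 : Integrable (Set.indicator (Set.Icc (1 - m) t) (fun _ => cII))
      (volume.restrict (Set.Icc (0:ℝ) 1)) :=
    (integrableOn_const hfin.ne).indicator measurableSet_Icc
  rw [integral_add hi1 hi2]
  have hs1 : Set.Ioo t (1 - m) ⊆ Set.Icc (0:ℝ) 1 := fun x hx =>
    ⟨le_of_lt (lt_of_le_of_lt ht0 hx.1), le_of_lt (lt_of_lt_of_le hx.2 (by linarith))⟩
  have hs2 : Set.Icc (1 - m) t ⊆ Set.Icc (0:ℝ) 1 := fun x hx =>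
    ⟨le_trans (by linarith) hx.1, le_trans hx.2 ht1⟩
  rw [setIntegral_indicator measurableSet_Ioo, setIntegral_indicator measurableSet_Icc,
    Set.inter_eq_self_of_subset_right hs1, Set.inter_eq_self_of_subset_right hs2,
    setIntegral_const, setIntegral_const, Real.volume_real_Ioo, Real.volume_real_Icc,
    smul_eq_mul, smul_eq_mul]
  ring


lemma tent_int (cI cII lo hi c : ℝ) (h1 : lo ≤ c) (h2 : c ≤ hi) :
    ∫ m in Set.Ioc lo hi, (cI * max (c - m) 0 + cII * max (m - c) 0) =
    cI * (c - lo) ^ 2 / 2 + cII * (hi - c) ^ 2 / 2 := by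
  have hlohi : lo ≤ hi := le_trans h1 h2
  have hcont : Continuous fun m : ℝ => cI * max (c - m) 0 + cII * max (m - c) 0 := by
    apply Continuous.add
    · exact continuous_const.mul (((continuous_const.sub continuous_id).max continuous_const))
    · exact continuous_const.mul (((continuous_id.sub continuous_const).max continuous_const))
  rw [← intervalIntegral.integral_of_le hlohi,
    ← intervalIntegral.integral_add_adjacent_intervals (a := lo) (b := c) (c := hi)
      (hcont.intervalIntegrable _ _) (hcont.intervalIntegrable _ _)]
  have e1 : (∫ m in lo..c, (cI * max (c - m) 0 + cII * max (m - c) 0)) =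
      ∫ m in lo..c, cI * (c - m) := by
    apply intervalIntegral.integral_congr
    intro x hx
    rw [Set.uIcc_of_le h1] at hx
    show cI * max (c - x) 0 + cII * max (x - c) 0 = cI * (c - x)
    rw [max_eq_left (by linarith [hx.2]), max_eq_right (by linarith [hx.2])]
    ring
  have e2 : (∫ m in c..hi, (cI * max (c - m) 0 + cII * max (m - c) 0)) =
      ∫ m in c..hi, cII * (m - c) := by
    apply intervalIntegral.integral_congr
    intro x hx
    rw [Set.uIcc_of_le h2] at hx
    show cI * max (c - x) 0 + cII * max (x - c) 0 = cII * (x - c)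
    rw [max_eq_right (by linarith [hx.1]), max_eq_left (by linarith [hx.1])]
    ring
  rw [e1, e2, intervalIntegral.integral_const_mul, intervalIntegral.integral_const_mul,
    intervalIntegral.integral_sub (continuous_const.intervalIntegrable _ _)
      (continuous_id'.intervalIntegrable _ _),
    intervalIntegral.integral_sub (continuous_id'.intervalIntegrable _ _)
      (continuous_const.intervalIntegrable _ _),
    intervalIntegral.integral_const, intervalIntegral.integral_const, integral_id, integral_id]
  simp only [smul_eq_mul]
  ring

lemma region_int (cI cII r lo hi : ℝ) (hr0 : 0 ≤ r) (hr1 : r ≤ 1) (hlo : 0 ≤ lo)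
    (hlh : lo ≤ hi) :
    ∫ m in Set.Ioc lo hi,
      (cI * max ((1 - m) - (1 - hi + (hi - lo) * r)) 0
        + cII * max ((1 - hi + (hi - lo) * r) - (1 - m)) 0) =
    (hi - lo) ^ 2 * (cI * (1 - r) ^ 2 + cII * r ^ 2) / 2 := by
  set c : ℝ := hi - (hi - lo) * r with hc
  have hlc : lo ≤ c := by nlinarith
  have hch : c ≤ hi := by nlinarith
  have key : (∫ m in Set.Ioc lo hi,
      (cI * max ((1 - m) - (1 - hi + (hi - lo) * r)) 0
        + cII * max ((1 - hi + (hi - lo) * r) - (1 - m)) 0)) =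
      ∫ m in Set.Ioc lo hi, (cI * max (c - m) 0 + cII * max (m - c) 0) := by
    apply setIntegral_congr_fun measurableSet_Ioc
    intro x _
    show cI * max ((1 - x) - (1 - hi + (hi - lo) * r)) 0
        + cII * max ((1 - hi + (hi - lo) * r) - (1 - x)) 0
      = cI * max (c - x) 0 + cII * max (x - c) 0
    have e1 : (1 - x) - (1 - hi + (hi - lo) * r) = c - x := by rw [hc]; ring
    have e2 : (1 - hi + (hi - lo) * r) - (1 - x) = x - c := by rw [hc]; ring
    rw [e1, e2]
  rw [key, tent_int cI cII lo hi c hlc hch, hc]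
  ring


lemma measurable_decide_le {α : Type*} [MeasurableSpace α] {f g : α → ℝ}
    (hf : Measurable f) (hg : Measurable g) : Measurable fun p => decide (f p ≤ g p) := by
  have : (fun p => decide (f p ≤ g p)) = fun p => if f p ≤ g p then true else false := by
    funext p; by_cases h : f p ≤ g p <;> simp [h]
  rw [this]
  exact Measurable.ite (measurableSet_le hf hg) measurable_const measurable_const

lemma F_meas (cI cII ΔII ql qh : ℝ) :
    Measurable (fun p : ℝ × ℝ =>
      lossFn cI cII (decide (1 ≤ p.1 + p.2)) (act3 cI cII ΔII ql qh p.1 p.2)) := by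
  have hd : Measurable (fun p : ℝ × ℝ => decide (1 ≤ p.1 + p.2)) :=
    measurable_decide_le measurable_const (measurable_fst.add measurable_snd)
  have ha : Measurable (fun p : ℝ × ℝ => act3 cI cII ΔII ql qh p.1 p.2) := by
    unfold act3
    apply Measurable.ite (measurableSet_le measurable_snd measurable_const)
    · exact measurable_decide_le measurable_fst measurable_const
    · apply Measurable.ite (measurableSet_le measurable_snd measurable_const)
      · exact measurable_decide_le measurable_fst measurable_const
      · exact measurable_decide_le measurable_fst measurable_const
  exact (Measurable.of_discrete (f := fun q : Bool × Bool => lossFn cI cII q.1 q.2)).comp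
    (hd.prodMk ha)

lemma loss_abs_le (cI cII : ℝ) (y a : Bool) : |lossFn cI cII y a| ≤ |cI| + |cII| := by
  unfold lossFn
  refine le_trans (abs_add_le _ _) (add_le_add ?_ ?_) <;> split <;>
    simp [abs_nonneg, le_refl]

lemma F_int (cI cII ΔII ql qh : ℝ) :
    IntegrableOn (fun p : ℝ × ℝ =>
      lossFn cI cII (decide (1 ≤ p.1 + p.2)) (act3 cI cII ΔII ql qh p.1 p.2))
      (Set.Icc (0:ℝ) 1 ×ˢ Set.Icc (0:ℝ) 1) := by
  have hfin : volume (Set.Icc (0:ℝ) 1 ×ˢ Set.Icc (0:ℝ) 1) < ⊤ :=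
    (isCompact_Icc.prod isCompact_Icc).measure_lt_top
  refine Integrable.mono' (g := fun _ => |cI| + |cII|)
    (integrableOn_const hfin.ne) ((F_meas cI cII ΔII ql qh).aestronglyMeasurable) ?_
  filter_upwards with p
  rw [Real.norm_eq_abs]
  exact loss_abs_le cI cII _ _


lemma tbound (lo hi r : ℝ) (l0 : 0 ≤ lo) (lh : lo ≤ hi) (h1' : hi ≤ 1) (r0 : 0 ≤ r)
    (r1' : r ≤ 1) : 0 ≤ 1 - hi + (hi - lo) * r ∧ 1 - hi + (hi - lo) * r ≤ 1 := by
  constructor <;> nlinarith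

set_option maxHeartbeats 800000 in
lemma L3_eq (cI cII ΔII ql qh : ℝ) (hcI : 0 < cI) (hcII : 0 < cII) (hΔ : 0 ≤ ΔII)
    (h0 : 0 ≤ ql) (h1 : ql ≤ qh) (h2 : qh ≤ 1) :
    L3 cI cII ΔII ql qh =
      ((cI * cII / (cI + cII)) * ql ^ 2 + (cI * cII / (cI + cII)) * (qh - ql) ^ 2
        + (cI * ((cII + ΔII) ^ 2 + cI * cII) / (cI + cII + ΔII) ^ 2) * (1 - qh) ^ 2) / 2 := by
  have hS : 0 < cI + cII := by linarith
  have hT : 0 < cI + cII + ΔII := by linarith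
  have hr10 : 0 ≤ cI / (cI + cII) := div_nonneg hcI.le hS.le
  have hr11 : cI / (cI + cII) ≤ 1 := (div_le_one hS).2 (by linarith)
  have hr30 : 0 ≤ cI / (cI + cII + ΔII) := div_nonneg hcI.le hT.le
  have hr31 : cI / (cI + cII + ΔII) ≤ 1 := (div_le_one hT).2 (by linarith)
  have hql1 : ql ≤ 1 := le_trans h1 h2
  -- Fubini
  have hint2 : Integrable (fun p : ℝ × ℝ =>
      lossFn cI cII (decide (1 ≤ p.1 + p.2)) (act3 cI cII ΔII ql qh p.1 p.2))
      ((volume.restrict (Set.Icc (0:ℝ) 1)).prod (volume.restrict (Set.Icc (0:ℝ) 1))) := by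
    rw [Measure.prod_restrict]
    have := F_int cI cII ΔII ql qh
    rwa [IntegrableOn, Measure.volume_eq_prod] at this
  have fub : L3 cI cII ΔII ql qh = ∫ m in Set.Icc (0:ℝ) 1, ∫ h in Set.Icc (0:ℝ) 1,
      lossFn cI cII (decide (1 ≤ h + m)) (act3 cI cII ΔII ql qh h m) := by
    rw [L3]
    calc (∫ p in Set.Icc (0:ℝ) 1 ×ˢ Set.Icc (0:ℝ) 1,
        lossFn cI cII (decide (1 ≤ p.1 + p.2)) (act3 cI cII ΔII ql qh p.1 p.2))
        = ∫ p, lossFn cI cII (decide (1 ≤ p.1 + p.2)) (act3 cI cII ΔII ql qh p.1 p.2)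
            ∂((volume.restrict (Set.Icc (0:ℝ) 1)).prod (volume.restrict (Set.Icc (0:ℝ) 1))) := by
          rw [Measure.prod_restrict, ← Measure.volume_eq_prod]
      _ = _ := integral_prod_symm _ hint2
  -- the three regional values of the inner integral
  have hreg1 : ∀ m ∈ Set.Ioc (0:ℝ) ql,
      (∫ h in Set.Icc (0:ℝ) 1,
        lossFn cI cII (decide (1 ≤ h + m)) (act3 cI cII ΔII ql qh h m)) =
      cI * max ((1 - m) - (1 - ql + (ql - 0) * (cI / (cI + cII)))) 0
        + cII * max ((1 - ql + (ql - 0) * (cI / (cI + cII))) - (1 - m)) 0 := by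
    intro m hm
    have hthv : hth cI cII 0 0 ql = 1 - ql + (ql - 0) * (cI / (cI + cII)) := by
      rw [hth, add_zero]
    have heq : (fun h => lossFn cI cII (decide (1 ≤ h + m)) (act3 cI cII ΔII ql qh h m)) =
        fun h => lossFn cI cII (decide (1 ≤ h + m))
          (decide (h ≤ 1 - ql + (ql - 0) * (cI / (cI + cII)))) := by
      funext h; rw [act3, if_pos hm.2, hthv]
    rw [heq]
    obtain ⟨ht0, ht1⟩ := tbound 0 ql (cI / (cI + cII)) le_rfl h0 hql1 hr10 hr11
    exact inner_int cI cII _ m ht0 ht1 hm.1.le (le_trans hm.2 hql1)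
  have hreg2 : ∀ m ∈ Set.Ioc ql qh,
      (∫ h in Set.Icc (0:ℝ) 1,
        lossFn cI cII (decide (1 ≤ h + m)) (act3 cI cII ΔII ql qh h m)) =
      cI * max ((1 - m) - (1 - qh + (qh - ql) * (cI / (cI + cII)))) 0
        + cII * max ((1 - qh + (qh - ql) * (cI / (cI + cII))) - (1 - m)) 0 := by
    intro m hm
    have hthv : hth cI cII 0 ql qh = 1 - qh + (qh - ql) * (cI / (cI + cII)) := by
      rw [hth, add_zero]
    have heq : (fun h => lossFn cI cII (decide (1 ≤ h + m)) (act3 cI cII ΔII ql qh h m)) =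
        fun h => lossFn cI cII (decide (1 ≤ h + m))
          (decide (h ≤ 1 - qh + (qh - ql) * (cI / (cI + cII)))) := by
      funext h; rw [act3, if_neg (not_le.2 hm.1), if_pos hm.2, hthv]
    rw [heq]
    obtain ⟨ht0, ht1⟩ := tbound ql qh (cI / (cI + cII)) h0 h1 h2 hr10 hr11
    exact inner_int cI cII _ m ht0 ht1 (le_trans h0 hm.1.le) (le_trans hm.2 h2)
  have hreg3 : ∀ m ∈ Set.Ioc qh 1,
      (∫ h in Set.Icc (0:ℝ) 1,
        lossFn cI cII (decide (1 ≤ h + m)) (act3 cI cII ΔII ql qh h m)) =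
      cI * max ((1 - m) - (1 - 1 + (1 - qh) * (cI / (cI + cII + ΔII)))) 0
        + cII * max ((1 - 1 + (1 - qh) * (cI / (cI + cII + ΔII))) - (1 - m)) 0 := by
    intro m hm
    have hthv : hth cI cII ΔII qh 1 = 1 - 1 + (1 - qh) * (cI / (cI + cII + ΔII)) := rfl
    have heq : (fun h => lossFn cI cII (decide (1 ≤ h + m)) (act3 cI cII ΔII ql qh h m)) =
        fun h => lossFn cI cII (decide (1 ≤ h + m))
          (decide (h ≤ 1 - 1 + (1 - qh) * (cI / (cI + cII + ΔII)))) := by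
      funext h
      rw [act3, if_neg (not_le.2 (lt_of_le_of_lt h1 hm.1)), if_neg (not_le.2 hm.1), hthv]
    rw [heq]
    obtain ⟨ht0, ht1⟩ := tbound qh 1 (cI / (cI + cII + ΔII)) (le_trans h0 h1) h2 le_rfl hr30 hr31
    exact inner_int cI cII _ m ht0 ht1 (le_trans (le_trans h0 h1) hm.1.le) hm.2
  -- integrability of the inner integral on each region
  have hcontmax : ∀ t : ℝ, Continuous fun m : ℝ =>
      cI * max ((1 - m) - t) 0 + cII * max (t - (1 - m)) 0 := by
    intro t
    apply Continuous.add
    · exact continuous_const.mul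
        (((continuous_const.sub continuous_id').sub continuous_const).max continuous_const)
    · exact continuous_const.mul
        ((continuous_const.sub (continuous_const.sub continuous_id')).max continuous_const)
  have hG1 : IntegrableOn (fun m => ∫ h in Set.Icc (0:ℝ) 1,
      lossFn cI cII (decide (1 ≤ h + m)) (act3 cI cII ΔII ql qh h m)) (Set.Ioc 0 ql) :=
    (((hcontmax (1 - ql + (ql - 0) * (cI / (cI + cII)))).integrableOn_Ioc).congr_fun
      (fun m hm => (hreg1 m hm).symm) measurableSet_Ioc)
  have hG2 : IntegrableOn (fun m => ∫ h in Set.Icc (0:ℝ) 1,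
      lossFn cI cII (decide (1 ≤ h + m)) (act3 cI cII ΔII ql qh h m)) (Set.Ioc ql qh) :=
    (((hcontmax (1 - qh + (qh - ql) * (cI / (cI + cII)))).integrableOn_Ioc).congr_fun
      (fun m hm => (hreg2 m hm).symm) measurableSet_Ioc)
  have hG3 : IntegrableOn (fun m => ∫ h in Set.Icc (0:ℝ) 1,
      lossFn cI cII (decide (1 ≤ h + m)) (act3 cI cII ΔII ql qh h m)) (Set.Ioc qh 1) :=
    (((hcontmax (1 - 1 + (1 - qh) * (cI / (cI + cII + ΔII)))).integrableOn_Ioc).congr_fun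
      (fun m hm => (hreg3 m hm).symm) measurableSet_Ioc)
  -- split the outer integral
  rw [fub, MeasureTheory.integral_Icc_eq_integral_Ioc,
    ← Set.Ioc_union_Ioc_eq_Ioc h0 (le_trans h1 h2), ← Set.Ioc_union_Ioc_eq_Ioc h1 h2,
    setIntegral_union (Set.disjoint_union_right.2
        ⟨(Set.Ioc_disjoint_Ioc_of_le le_rfl),
         (Set.Ioc_disjoint_Ioc_of_le le_rfl).mono_right (Set.Ioc_subset_Ioc_left h1)⟩)
      (measurableSet_Ioc.union measurableSet_Ioc) hG1 (hG2.union hG3),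
    setIntegral_union (Set.Ioc_disjoint_Ioc_of_le le_rfl) measurableSet_Ioc hG2 hG3,
    setIntegral_congr_fun measurableSet_Ioc hreg1,
    setIntegral_congr_fun measurableSet_Ioc hreg2,
    setIntegral_congr_fun measurableSet_Ioc hreg3,
    region_int cI cII (cI / (cI + cII)) 0 ql hr10 hr11 le_rfl h0,
    region_int cI cII (cI / (cI + cII)) ql qh hr10 hr11 h0 h1,
    region_int cI cII (cI / (cI + cII + ΔII)) qh 1 hr30 hr31 (le_trans h0 h1) h2]
  field_simp
  ring


/-- In the uniform example with three-level recommendations, the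
optimal thresholds satisfy q_high = 2·q_low with q_low given by the explicit
formula; the pair (q_low, 2·q_low) minimizes the designer's expected loss over
all feasible threshold pairs, and is the unique minimizer. -/
theorem three_level_optimal_thresholds
    (cI cII ΔII : ℝ) (hcI : 0 < cI) (hcII : 0 < cII) (hΔ : 0 ≤ ΔII) :
    let qlo := 1 / (2 + cII * (cI + cII + ΔII) ^ 2
      / ((cI + cII) * ((cII + ΔII) ^ 2 + cI * cII)))
    (∀ ql qh : ℝ, 0 ≤ ql → ql ≤ qh → qh ≤ 1 →
      L3 cI cII ΔII qlo (2 * qlo) ≤ L3 cI cII ΔII ql qh) ∧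
    (∀ ql qh : ℝ, 0 ≤ ql → ql ≤ qh → qh ≤ 1 →
      L3 cI cII ΔII ql qh = L3 cI cII ΔII qlo (2 * qlo) →
      qh = 2 * ql ∧ ql = qlo) := by
  have hS : 0 < cI + cII := by linarith
  have hT : 0 < cI + cII + ΔII := by linarith
  have hD : 0 < (cII + ΔII) ^ 2 + cI * cII := by nlinarith
  set A := cI * cII / (cI + cII) with hA
  set B := cI * ((cII + ΔII) ^ 2 + cI * cII) / (cI + cII + ΔII) ^ 2 with hB
  have hApos : 0 < A := div_pos (mul_pos hcI hcII) hS
  have hBpos : 0 < B := div_pos (mul_pos hcI hD) (by positivity)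
  intro qlo
  have hq : qlo = B / (A + 2 * B) := by
    simp only [qlo]
    rw [hA, hB]
    rw [div_eq_div_iff (by positivity) (by positivity)]
    field_simp
    ring
  have hq0 : 0 < qlo := hq ▸ div_pos hBpos (by linarith)
  have hq1 : 2 * qlo ≤ 1 := by
    rw [hq, mul_div_assoc']
    exact (div_le_one (by linarith)).2 (by linarith)
  have key : A * qlo = B * (1 - 2 * qlo) := by
    rw [hq]
    field_simp
    ring
  clear_value qlo
  clear_value A B
  have diff : ∀ ql qh : ℝ, 0 ≤ ql → ql ≤ qh → qh ≤ 1 →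
      L3 cI cII ΔII ql qh = L3 cI cII ΔII qlo (2 * qlo) +
        (A * (ql - qlo) ^ 2 + A * ((qh - ql) - qlo) ^ 2 + B * (qh - 2 * qlo) ^ 2) / 2 := by
    intro ql qh a b c
    rw [L3_eq cI cII ΔII ql qh hcI hcII hΔ a b c,
      L3_eq cI cII ΔII qlo (2 * qlo) hcI hcII hΔ hq0.le (by linarith) hq1, ← hA, ← hB]
    linear_combination (qh - 2 * qlo) * key
  constructor
  · intro ql qh a b c
    rw [diff ql qh a b c]
    nlinarith [mul_nonneg hApos.le (sq_nonneg (ql - qlo)),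
      mul_nonneg hApos.le (sq_nonneg ((qh - ql) - qlo)),
      mul_nonneg hBpos.le (sq_nonneg (qh - 2 * qlo))]
  · intro ql qh a b c heq
    rw [diff ql qh a b c] at heq
    have hzero : A * (ql - qlo) ^ 2 + A * ((qh - ql) - qlo) ^ 2 + B * (qh - 2 * qlo) ^ 2 = 0 := by
      linarith
    have t1 : 0 ≤ A * (ql - qlo) ^ 2 := mul_nonneg hApos.le (sq_nonneg _)
    have t2 : 0 ≤ A * ((qh - ql) - qlo) ^ 2 := mul_nonneg hApos.le (sq_nonneg _)
    have t3 : 0 ≤ B * (qh - 2 * qlo) ^ 2 := mul_nonneg hBpos.le (sq_nonneg _)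
    have e1 : A * (ql - qlo) ^ 2 = 0 := by linarith
    have e3 : B * (qh - 2 * qlo) ^ 2 = 0 := by linarith
    have h1' : (ql - qlo) ^ 2 = 0 := (mul_eq_zero.1 e1).resolve_left hApos.ne'
    have h2' : (qh - 2 * qlo) ^ 2 = 0 := (mul_eq_zero.1 e3).resolve_left hBpos.ne'
    have hu : ql = qlo := by
      have := pow_eq_zero_iff (n := 2) (by norm_num) |>.1 h1'
      linarith [sub_eq_zero.1 this]
    have hv : qh = 2 * qlo := by
      have := pow_eq_zero_iff (n := 2) (by norm_num) |>.1 h2'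
      linarith [sub_eq_zero.1 this]
    exact ⟨by rw [hv, hu], hu⟩
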